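/- Let v : Fin N → ℝ be a probability mass function with all v i > 0 and a unique index m achieving the minimum value v_min (i.e., v m < v i for all i ≠ m). Define g(ϖ) = (∑ i, (v i)^2 * exp(ϖ*(1 - v i))) / (∑ i, v i * exp(ϖ*(1 - v i))). Then g(ϖ) → v m as ϖ → +∞. -/

import Mathlib

open Filter Real

lemma aux_sum_tendsto (N : ℕ) (v : Fin N → ℝ) (m : Fin N)
    (hmin : ∀ i, i ≠ m → v m < v i) (c : Fin N → ℝ) :
    Tendsto (fun ϖ : ℝ => ∑ i, c i * Real.exp (ϖ * (v m - v i)))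
      atTop (nhds (c m)) := by
  have h : Tendsto (fun ϖ : ℝ => ∑ i, c i * Real.exp (ϖ * (v m - v i)))
      atTop (nhds (∑ i, if i = m then c m else 0)) := by
    apply tendsto_finset_sum
    intro i _
    by_cases hi : i = m
    · subst hi
      simp only [if_pos rfl, sub_self, mul_zero, Real.exp_zero, mul_one]
      exact tendsto_const_nhds
    · simp only [if_neg hi]
      have ha : v m - v i < 0 := by linarith [hmin i hi]
      have h1 : Tendsto (fun ϖ : ℝ => ϖ * (v m - v i)) atTop atBot :=
        tendsto_id.atTop_mul_const_of_neg ha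
      have h2 := Real.tendsto_exp_atBot.comp h1
      simpa using h2.const_mul (c i)
  simpa using h

theorem stmt_2 (N : ℕ) (v : Fin N → ℝ)
    (hpos : ∀ i, 0 < v i) (hsum : ∑ i, v i = 1)
    (m : Fin N) (hmin : ∀ i, i ≠ m → v m < v i) :
    Filter.Tendsto (fun ϖ : ℝ =>
      (∑ i, (v i) ^ 2 * Real.exp (ϖ * (1 - v i))) /
      (∑ i, v i * Real.exp (ϖ * (1 - v i))))
      Filter.atTop (nhds (v m)) := by
  have hnum := aux_sum_tendsto N v m hmin (fun i => (v i) ^ 2)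
  have hden := aux_sum_tendsto N v m hmin (fun i => v i)
  have hvm : v m ≠ 0 := ne_of_gt (hpos m)
  have hdiv : Tendsto (fun ϖ : ℝ =>
      (∑ i, (v i) ^ 2 * Real.exp (ϖ * (v m - v i))) /
      (∑ i, v i * Real.exp (ϖ * (v m - v i))))
      atTop (nhds ((v m) ^ 2 / v m)) := hnum.div hden hvm
  have hval : (v m) ^ 2 / v m = v m := by
    field_simp [sq]
  rw [hval] at hdiv
  apply hdiv.congr
  intro ϖ
  have hE : Real.exp (ϖ * (1 - v m)) ≠ 0 := Real.exp_ne_zero _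
  have key : ∀ i, Real.exp (ϖ * (1 - v i)) =
      Real.exp (ϖ * (v m - v i)) * Real.exp (ϖ * (1 - v m)) := by
    intro i
    rw [← Real.exp_add]
    ring_nf
  have hs : ∀ a : Fin N → ℝ, ∑ i, a i * Real.exp (ϖ * (1 - v i))
      = (∑ i, a i * Real.exp (ϖ * (v m - v i))) * Real.exp (ϖ * (1 - v m)) := by
    intro a
    rw [Finset.sum_mul]
    refine Finset.sum_congr rfl fun i _ => ?_
    rw [key i]; ring
  rw [hs, hs, mul_div_mul_right _ _ hE]
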